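/- Let P be a weighted finite set of points and L a weighted finite set of lines in ℝ², with positive integer weights w. Define |A|₁ = Σ w(a), |A|₂² = Σ w(a)², |A|_∞ = max w(a), and the weighted incidence count I(P,L) = Σ_{p∈P} Σ_{ℓ∈L} [p∈ℓ] w(p)w(ℓ). Then I(P,L) = O((|P|₂² |P|₁ |L|₂² |L|₁)^{1/3} + |L|_∞ |P|₁ + |P|_∞ |L|₁), assuming the Szemerédi–Trotter theorem for unweighted points and lines. -/

import Mathlib

open scoped Classical

set_option maxHeartbeats 1000000

noncomputable section

abbrev Plane := EuclideanSpace ℝ (Fin 2)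

def IsLine (L : Set Plane) : Prop :=
  ∃ (v : Plane) (t : ℝ), v ≠ 0 ∧ L = {x | (inner ℝ v x : ℝ) = t}

private lemma cube_diff_lb (u v : ℝ) (hv : 0 ≤ v) (hvu : v ≤ u) (h : u^3 - v^3 = 1) :
    1 ≤ 3 * u^2 * (u - v) := by
  nlinarith [mul_nonneg (sq_nonneg (u - v)) (by linarith : (0:ℝ) ≤ 2*u + v)]

private lemma indicator_sum {α : Type*} (A : Finset α) (w : α → ℕ) (a : α) (ha : a ∈ A) :
    ∑ k ∈ Finset.Icc 1 (A.sup w), (if k ≤ w a then (1:ℝ) else 0) = w a := by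
  have hle : w a ≤ A.sup w := Finset.le_sup ha
  rw [Finset.sum_boole]
  have h2 : (Finset.Icc 1 (A.sup w)).filter (fun k => k ≤ w a) = Finset.Icc 1 (w a) := by
    ext k; simp only [Finset.mem_filter, Finset.mem_Icc]; omega
  rw [h2, Nat.card_Icc]
  simp

private lemma class_card_le {α : Type*} (A : Finset α) (w : α → ℕ) (k : ℕ) (e : ℕ) :
    ((k:ℝ))^e * ((A.filter (fun a => k ≤ w a)).card : ℝ) ≤ ∑ a ∈ A, (w a : ℝ)^e := by
  calc ((k:ℝ))^e * ((A.filter (fun a => k ≤ w a)).card : ℝ)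
      = ∑ _a ∈ A.filter (fun a => k ≤ w a), ((k:ℝ))^e := by
        rw [Finset.sum_const, nsmul_eq_mul, mul_comm]
    _ ≤ ∑ a ∈ A.filter (fun a => k ≤ w a), (w a:ℝ)^e := Finset.sum_le_sum (fun a ha => by
        have h := (Finset.mem_filter.1 ha).2
        exact pow_le_pow_left₀ (by positivity) (by exact_mod_cast h) e)
    _ ≤ ∑ a ∈ A, (w a:ℝ)^e := Finset.sum_le_sum_of_subset_of_nonneg (Finset.filter_subset _ _)
        (fun a _ _ => by positivity)

private lemma cube_g {n : ℕ} : (((n:ℝ)) ^ ((1:ℝ)/3))^(3:ℕ) = (n:ℝ) := by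
  rw [← Real.rpow_natCast ((n:ℝ) ^ ((1:ℝ)/3)) 3, ← Real.rpow_mul (Nat.cast_nonneg n)]
  norm_num

private lemma weight_class_sum {α : Type*} (A : Finset α) (w : α → ℕ) :
    ∑ k ∈ Finset.Icc 1 (A.sup w), (((A.filter (fun a => k ≤ w a)).card : ℝ)) ^ ((2:ℝ)/3) ≤
      7 * ((∑ a ∈ A, (w a : ℝ)^2) * (∑ a ∈ A, (w a : ℝ))) ^ ((1:ℝ)/3) := by
  set N := A.sup w with hN
  have hS2nn : (0:ℝ) ≤ ∑ a ∈ A, (w a : ℝ)^2 := Finset.sum_nonneg (fun a _ => by positivity)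
  have hS1nn : (0:ℝ) ≤ ∑ a ∈ A, (w a : ℝ) := Finset.sum_nonneg (fun a _ => by positivity)
  rcases Nat.eq_zero_or_pos N with h0 | hNpos
  · rw [h0, show Finset.Icc 1 0 = (∅ : Finset ℕ) by rfl, Finset.sum_empty]
    positivity
  -- main case
  set S1 := ∑ a ∈ A, (w a : ℝ) with hS1
  set S2 := ∑ a ∈ A, (w a : ℝ)^2 with hS2
  have hA : A.Nonempty := by
    rcases A.eq_empty_or_nonempty with h | h
    · exfalso; rw [hN, h, Finset.sup_empty] at hNpos; exact absurd hNpos (by simp)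
    · exact h
  have hS1pos : 0 < S1 := by
    obtain ⟨a, ha, hwa⟩ := Finset.exists_mem_eq_sup A hA w
    have h1 : (1:ℝ) ≤ (w a : ℝ) := by
      have h2 := hNpos
      rw [hN, hwa] at h2
      exact_mod_cast h2
    calc (0:ℝ) < 1 := one_pos
      _ ≤ (w a : ℝ) := h1
      _ ≤ S1 := Finset.single_le_sum (f := fun b => ((w b : ℝ))) (fun b _ => by positivity) ha
  have hS12 : S1 ≤ S2 := by
    apply Finset.sum_le_sum
    intro a _
    have : w a ≤ (w a)^2 := Nat.le_self_pow (by norm_num) _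
    calc (w a : ℝ) ≤ ((w a)^2 : ℕ) := by exact_mod_cast this
      _ = (w a : ℝ)^2 := by push_cast; ring
  set K := S2 / S1 with hK
  have hKpos : 0 < K := div_pos (lt_of_lt_of_le hS1pos hS12) hS1pos
  have hK1 : 1 ≤ K := (one_le_div hS1pos).2 hS12
  set M := ⌊K⌋₊ with hM
  have hM1 : 1 ≤ M := Nat.le_floor (by exact_mod_cast hK1)
  have hMK : (M:ℝ) ≤ K := Nat.floor_le hKpos.le
  have hKM : K ≤ 2*M := by
    have h1 : K < M + 1 := Nat.lt_floor_add_one K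
    have h2 : (1:ℝ) ≤ (M:ℝ) := by exact_mod_cast hM1
    linarith
  set g : ℕ → ℝ := fun n => (n:ℝ) ^ ((1:ℝ)/3) with hg
  have hg0 : g 0 = 0 := by simp [hg, Real.zero_rpow (by norm_num : (1:ℝ)/3 ≠ 0)]
  have hgnn : ∀ n, 0 ≤ g n := fun n => Real.rpow_nonneg (Nat.cast_nonneg n) _
  have hgm : ∀ {m n : ℕ}, m ≤ n → g m ≤ g n := fun {m n} h =>
    Real.rpow_le_rpow (Nat.cast_nonneg m) (by exact_mod_cast h) (by norm_num)
  have hg1 : ∀ {n : ℕ}, 1 ≤ n → 1 ≤ g n := fun {n} h =>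
    Real.one_le_rpow (by exact_mod_cast h) (by norm_num)
  -- head pointwise
  have head_k : ∀ k : ℕ, 1 ≤ k → 1/((k:ℝ)) ^ ((2:ℝ)/3) ≤ 3 * (g k - g (k-1)) := by
    intro k hk
    have hv3 : (g (k-1))^(3:ℕ) = (k:ℝ) - 1 := by
      rw [cube_g]; push_cast [hk]; ring
    have huv : g (k-1) ≤ g k := hgm (Nat.sub_le k 1)
    have h1 : 1 ≤ 3 * (g k)^2 * (g k - g (k-1)) := by
      apply cube_diff_lb _ _ (hgnn _) huv
      rw [show ((g k)^3 : ℝ) = (g k)^(3:ℕ) by norm_num, cube_g, hv3]; ring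
    have hu2 : (g k)^2 = (k:ℝ) ^ ((2:ℝ)/3) := by
      rw [hg]
      rw [show ((k:ℝ)^((1:ℝ)/3))^2 = ((k:ℝ)^((1:ℝ)/3))^(2:ℕ) by norm_num,
        ← Real.rpow_natCast ((k:ℝ) ^ ((1:ℝ)/3)) 2, ← Real.rpow_mul (Nat.cast_nonneg k)]
      norm_num
    have hu2pos : 0 < (g k)^2 := by
      have := hg1 hk; positivity
    rw [← hu2, div_le_iff₀ hu2pos]
    nlinarith [h1]
  -- tail pointwise
  have tail_k : ∀ k : ℕ, 2 ≤ k → 1/(((k:ℝ)^2)) ^ ((2:ℝ)/3) ≤ 3 * (1/g (k-1) - 1/g k) := by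
    intro k hk
    have ha1 : 1 ≤ g (k-1) := hg1 (by omega)
    have hb1 : 1 ≤ g k := hg1 (by omega)
    have hab : g (k-1) ≤ g k := hgm (Nat.sub_le k 1)
    have hv3 : (g (k-1))^(3:ℕ) = (k:ℝ) - 1 := by
      rw [cube_g]; push_cast [show 1 ≤ k by omega]; ring
    have h1 : 1 ≤ 3 * (g k)^2 * (g k - g (k-1)) := by
      apply cube_diff_lb _ _ (hgnn _) hab
      rw [show ((g k)^3 : ℝ) = (g k)^(3:ℕ) by norm_num, cube_g, hv3]; ring
    have hb4 : (((k:ℝ)^2)) ^ ((2:ℝ)/3) = (g k)^4 := by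
      rw [hg, show ((k:ℝ)^((1:ℝ)/3))^4 = ((k:ℝ)^((1:ℝ)/3))^(4:ℕ) by norm_num,
        ← Real.rpow_natCast ((k:ℝ) ^ ((1:ℝ)/3)) 4, ← Real.rpow_mul (Nat.cast_nonneg k),
        show ((k:ℝ)^2) = (k:ℝ)^(2:ℕ) by norm_num, ← Real.rpow_natCast (k:ℝ) 2,
        ← Real.rpow_mul (Nat.cast_nonneg k)]
      norm_num
    rw [hb4]
    have hapos : 0 < g (k-1) := lt_of_lt_of_le one_pos ha1
    have hbpos : 0 < g k := lt_of_lt_of_le one_pos hb1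
    have heq : 1/g (k-1) - 1/g k = (g k - g (k-1))/(g (k-1) * g k) := by
      field_simp
    rw [heq, mul_div_assoc' 3, div_le_div_iff₀ (by positivity) (by positivity)]
    nlinarith [mul_le_mul_of_nonneg_right h1 (sq_nonneg (g k)),
      mul_le_mul_of_nonneg_right hab hbpos.le]
  -- cardinality bounds
  have hcard1 : ∀ k : ℕ, 1 ≤ k → ((A.filter (fun a => k ≤ w a)).card : ℝ) ≤ S1 / k := by
    intro k hk
    have h := class_card_le A w k 1
    simp only [pow_one] at h
    rw [le_div_iff₀ (by exact_mod_cast hk : (0:ℝ) < (k:ℝ))]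
    rw [mul_comm]; exact h
  have hcard2 : ∀ k : ℕ, 1 ≤ k → ((A.filter (fun a => k ≤ w a)).card : ℝ) ≤ S2 / (k:ℝ)^2 := by
    intro k hk
    have h := class_card_le A w k 2
    rw [le_div_iff₀ (by positivity : (0:ℝ) < (k:ℝ)^2)]
    rw [mul_comm]; exact h
  rw [← Finset.sum_filter_add_sum_filter_not (Finset.Icc 1 N) (fun k => k ≤ M)]
  have head : ∑ k ∈ (Finset.Icc 1 N).filter (fun k => k ≤ M),
      (((A.filter (fun a => k ≤ w a)).card : ℝ)) ^ ((2:ℝ)/3) ≤ 3 * ((S2*S1) ^ ((1:ℝ)/3)) := by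
    have tel : ∑ k ∈ Finset.Icc 1 M, (g k - g (k-1)) = g M := by
      rw [← Finset.Ico_add_one_right_eq_Icc, Finset.sum_Ico_eq_sum_range]
      simp only [Nat.add_sub_cancel]
      rw [Finset.sum_congr rfl (fun i _ => by rw [Nat.add_comm 1 i, Nat.add_sub_cancel]),
        Finset.sum_range_sub g, hg0, sub_zero]
    calc ∑ k ∈ (Finset.Icc 1 N).filter (fun k => k ≤ M),
          (((A.filter (fun a => k ≤ w a)).card : ℝ)) ^ ((2:ℝ)/3)
        ≤ ∑ k ∈ (Finset.Icc 1 N).filter (fun k => k ≤ M),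
            S1^((2:ℝ)/3) * (3*(g k - g (k-1))) := by
          apply Finset.sum_le_sum
          intro k hk
          obtain ⟨hkI, -⟩ := Finset.mem_filter.1 hk
          obtain ⟨hk1, -⟩ := Finset.mem_Icc.1 hkI
          calc (((A.filter (fun a => k ≤ w a)).card : ℝ)) ^ ((2:ℝ)/3)
              ≤ (S1/(k:ℝ)) ^ ((2:ℝ)/3) :=
                Real.rpow_le_rpow (Nat.cast_nonneg _) (hcard1 k hk1) (by norm_num)
            _ = S1^((2:ℝ)/3) * (1/(k:ℝ)^((2:ℝ)/3)) := by
                rw [Real.div_rpow hS1nn (Nat.cast_nonneg k), div_eq_mul_one_div]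
            _ ≤ S1^((2:ℝ)/3) * (3*(g k - g (k-1))) :=
                mul_le_mul_of_nonneg_left (head_k k hk1) (Real.rpow_nonneg hS1nn _)
      _ ≤ ∑ k ∈ Finset.Icc 1 M, S1^((2:ℝ)/3) * (3*(g k - g (k-1))) := by
          apply Finset.sum_le_sum_of_subset_of_nonneg
          · intro k hk
            obtain ⟨hkI, hkM⟩ := Finset.mem_filter.1 hk
            obtain ⟨hk1, -⟩ := Finset.mem_Icc.1 hkI
            exact Finset.mem_Icc.2 ⟨hk1, hkM⟩
          · intro k _ _
            have := hgm (Nat.sub_le k 1)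
            have h0 := Real.rpow_nonneg hS1nn ((2:ℝ)/3)
            nlinarith
      _ = S1^((2:ℝ)/3) * 3 * g M := by
          rw [← Finset.mul_sum, ← Finset.mul_sum, tel]; ring
      _ ≤ S1^((2:ℝ)/3) * 3 * K^((1:ℝ)/3) := by
          apply mul_le_mul_of_nonneg_left _ (by positivity)
          exact Real.rpow_le_rpow (Nat.cast_nonneg M) hMK (by norm_num)
      _ = 3 * ((S2*S1) ^ ((1:ℝ)/3)) := by
          have e1 : K^((1:ℝ)/3) = S2^((1:ℝ)/3)/S1^((1:ℝ)/3) := by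
            rw [hK, Real.div_rpow hS2nn hS1nn]
          have e2 : S1^((2:ℝ)/3) = S1^((1:ℝ)/3) * S1^((1:ℝ)/3) := by
            rw [← Real.rpow_add hS1pos]; norm_num
          have e3 : (S2*S1)^((1:ℝ)/3) = S2^((1:ℝ)/3) * S1^((1:ℝ)/3) :=
            Real.mul_rpow hS2nn hS1nn
          have hne : S1^((1:ℝ)/3) ≠ 0 := by positivity
          rw [e1, e2, e3]; field_simp
  have hS2pos : 0 < S2 := lt_of_lt_of_le hS1pos hS12
  have tail : ∑ k ∈ (Finset.Icc 1 N).filter (fun k => ¬ k ≤ M),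
      (((A.filter (fun a => k ≤ w a)).card : ℝ)) ^ ((2:ℝ)/3) ≤ 4 * ((S2*S1) ^ ((1:ℝ)/3)) := by
    have hgMpos : 0 < g M := lt_of_lt_of_le one_pos (hg1 hM1)
    have tel2 : ∑ k ∈ Finset.Icc (M+1) N, (1/g (k-1) - 1/g k)
        = 1/g M - 1/g (M + (N - M)) := by
      rw [← Finset.Ico_add_one_right_eq_Icc, Finset.sum_Ico_eq_sum_range]
      simp only [Nat.add_sub_add_right]
      rw [Finset.sum_congr rfl (fun i _ => by
          show 1/g (M+1+i-1) - 1/g (M+1+i) = (fun j => 1/g (M+j)) i - (fun j => 1/g (M+j)) (i+1)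
          have e1 : M+1+i-1 = M+i := by omega
          have e2 : M+1+i = M+(i+1) := by omega
          rw [e1, e2]),
        Finset.sum_range_sub' (fun j => 1/g (M+j))]
      simp
    calc ∑ k ∈ (Finset.Icc 1 N).filter (fun k => ¬ k ≤ M),
          (((A.filter (fun a => k ≤ w a)).card : ℝ)) ^ ((2:ℝ)/3)
        ≤ ∑ k ∈ (Finset.Icc 1 N).filter (fun k => ¬ k ≤ M),
            S2^((2:ℝ)/3) * (3*(1/g (k-1) - 1/g k)) := by
          apply Finset.sum_le_sum
          intro k hk
          obtain ⟨hkI, hkM⟩ := Finset.mem_filter.1 hk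
          obtain ⟨hk1, -⟩ := Finset.mem_Icc.1 hkI
          have hk2 : 2 ≤ k := by omega
          calc (((A.filter (fun a => k ≤ w a)).card : ℝ)) ^ ((2:ℝ)/3)
              ≤ (S2/(k:ℝ)^2) ^ ((2:ℝ)/3) :=
                Real.rpow_le_rpow (Nat.cast_nonneg _) (hcard2 k hk1) (by norm_num)
            _ = S2^((2:ℝ)/3) * (1/((k:ℝ)^2)^((2:ℝ)/3)) := by
                rw [Real.div_rpow hS2nn (by positivity), div_eq_mul_one_div]
            _ ≤ S2^((2:ℝ)/3) * (3*(1/g (k-1) - 1/g k)) :=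
                mul_le_mul_of_nonneg_left (tail_k k hk2) (Real.rpow_nonneg hS2nn _)
      _ ≤ ∑ k ∈ Finset.Icc (M+1) N, S2^((2:ℝ)/3) * (3*(1/g (k-1) - 1/g k)) := by
          apply Finset.sum_le_sum_of_subset_of_nonneg
          · intro k hk
            obtain ⟨hkI, hkM⟩ := Finset.mem_filter.1 hk
            obtain ⟨-, hkN⟩ := Finset.mem_Icc.1 hkI
            exact Finset.mem_Icc.2 ⟨by omega, hkN⟩
          · intro k hk _
            obtain ⟨hkM, -⟩ := Finset.mem_Icc.1 hk
            have h1 : 0 < g (k-1) := lt_of_lt_of_le one_pos (hg1 (by omega))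
            have h2 : 1/g k ≤ 1/g (k-1) := one_div_le_one_div_of_le h1 (hgm (Nat.sub_le k 1))
            have h0 := Real.rpow_nonneg hS2nn ((2:ℝ)/3)
            nlinarith
      _ = S2^((2:ℝ)/3) * 3 * (1/g M - 1/g (M + (N-M))) := by
          rw [← Finset.mul_sum, ← Finset.mul_sum, tel2]; ring
      _ ≤ S2^((2:ℝ)/3) * 3 * (1/g M) := by
          apply mul_le_mul_of_nonneg_left _ (by positivity)
          have : 0 ≤ 1/g (M + (N-M)) := by positivity
          linarith
      _ ≤ S2^((2:ℝ)/3) * 3 * ((4/3)/K^((1:ℝ)/3)) := by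
          apply mul_le_mul_of_nonneg_left _ (by positivity)
          have h2 : (K/2)^((1:ℝ)/3) ≤ g M :=
            Real.rpow_le_rpow (by positivity) (by linarith) (by norm_num)
          have h3 : 1/g M ≤ 1/(K/2)^((1:ℝ)/3) :=
            one_div_le_one_div_of_le (by positivity) h2
          have h4 : (K/2)^((1:ℝ)/3) = K^((1:ℝ)/3)/(2:ℝ)^((1:ℝ)/3) :=
            Real.div_rpow hKpos.le (by norm_num) _
          have h5 : (2:ℝ)^((1:ℝ)/3) ≤ 4/3 := by
            have hc : ((2:ℝ)^((1:ℝ)/3))^(3:ℕ) = 2 := by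
              rw [← Real.rpow_natCast ((2:ℝ)^((1:ℝ)/3)) 3,
                ← Real.rpow_mul (by norm_num : (0:ℝ) ≤ 2)]
              norm_num
            nlinarith [Real.rpow_nonneg (by norm_num : (0:ℝ) ≤ 2) ((1:ℝ)/3), hc,
              sq_nonneg ((2:ℝ)^((1:ℝ)/3) - 4/3), sq_nonneg ((2:ℝ)^((1:ℝ)/3) + 4/3)]
          have h6 : 1/(K/2)^((1:ℝ)/3) ≤ (4/3)/K^((1:ℝ)/3) := by
            rw [h4, one_div_div]
            gcongr
          linarith
      _ = 4 * ((S2*S1) ^ ((1:ℝ)/3)) := by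
          have e1 : K^((1:ℝ)/3) = S2^((1:ℝ)/3)/S1^((1:ℝ)/3) := by
            rw [hK, Real.div_rpow hS2nn hS1nn]
          have e2 : S2^((2:ℝ)/3) = S2^((1:ℝ)/3) * S2^((1:ℝ)/3) := by
            rw [← Real.rpow_add hS2pos]; norm_num
          have e3 : (S2*S1)^((1:ℝ)/3) = S2^((1:ℝ)/3) * S1^((1:ℝ)/3) :=
            Real.mul_rpow hS2nn hS1nn
          have hne : S1^((1:ℝ)/3) ≠ 0 := by positivity
          have hne2 : S2^((1:ℝ)/3) ≠ 0 := by positivity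
          rw [e1, e2, e3]; field_simp
  linarith

private lemma class_card_total {α : Type*} (A : Finset α) (w : α → ℕ) :
    ∑ k ∈ Finset.Icc 1 (A.sup w), ((A.filter (fun a => k ≤ w a)).card : ℝ)
      = ∑ a ∈ A, (w a : ℝ) := by
  calc ∑ k ∈ Finset.Icc 1 (A.sup w), ((A.filter (fun a => k ≤ w a)).card : ℝ)
      = ∑ k ∈ Finset.Icc 1 (A.sup w), ∑ a ∈ A, (if k ≤ w a then (1:ℝ) else 0) :=
        Finset.sum_congr rfl (fun k _ => (Finset.sum_boole ..).symm)
    _ = ∑ a ∈ A, ∑ k ∈ Finset.Icc 1 (A.sup w), (if k ≤ w a then (1:ℝ) else 0) :=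
        Finset.sum_comm
    _ = ∑ a ∈ A, (w a : ℝ) := Finset.sum_congr rfl (fun a ha => indicator_sum A w a ha)

/-- Weighted Szemerédi–Trotter: assuming the unweighted Szemerédi–Trotter theorem, for weighted
points `P` and weighted lines `L` with positive integer weights, the number of weighted
incidences is `O((|P|₂²|P|₁|L|₂²|L|₁)^{1/3} + |L|_∞|P|₁ + |P|_∞|L|₁)`. -/
theorem weighted_szemeredi_trotter
    (hST : ∃ C₀ > (0:ℝ), ∀ (P : Finset Plane) (L : Finset (Set Plane)),
      (∀ ℓ ∈ L, IsLine ℓ) →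
      ((∑ p ∈ P, ∑ ℓ ∈ L, if p ∈ ℓ then 1 else 0 : ℝ)) ≤
        C₀ * ((P.card : ℝ) ^ ((2:ℝ)/3) * (L.card : ℝ) ^ ((2:ℝ)/3) + P.card + L.card)) :
    ∃ C > (0:ℝ), ∀ (P : Finset Plane) (L : Finset (Set Plane))
      (wP : Plane → ℕ) (wL : Set Plane → ℕ),
      (∀ ℓ ∈ L, IsLine ℓ) → (∀ p ∈ P, 0 < wP p) → (∀ ℓ ∈ L, 0 < wL ℓ) →
      ((∑ p ∈ P, ∑ ℓ ∈ L, if p ∈ ℓ then (wP p : ℝ) * wL ℓ else 0)) ≤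
        C * ((((∑ p ∈ P, (wP p : ℝ)^2) * (∑ p ∈ P, (wP p : ℝ)) *
              (∑ ℓ ∈ L, (wL ℓ : ℝ)^2) * (∑ ℓ ∈ L, (wL ℓ : ℝ))) ^ ((1:ℝ)/3)) +
            ((L.sup wL : ℕ) : ℝ) * (∑ p ∈ P, (wP p : ℝ)) +
            ((P.sup wP : ℕ) : ℝ) * (∑ ℓ ∈ L, (wL ℓ : ℝ))) := by
  obtain ⟨C₀, hC₀pos, hST⟩ := hST
  refine ⟨49*C₀, by positivity, ?_⟩
  intro P L wP wL hL hwP hwL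
  set NP := P.sup wP with hNP
  set NL := L.sup wL with hNL
  set KP := Finset.Icc 1 NP with hKP
  set KL := Finset.Icc 1 NL with hKL
  set SP1 := ∑ p ∈ P, (wP p : ℝ) with hSP1
  set SP2 := ∑ p ∈ P, (wP p : ℝ)^2 with hSP2
  set SL1 := ∑ ℓ ∈ L, (wL ℓ : ℝ) with hSL1
  set SL2 := ∑ ℓ ∈ L, (wL ℓ : ℝ)^2 with hSL2
  have hSP1nn : 0 ≤ SP1 := Finset.sum_nonneg (fun a _ => by positivity)
  have hSP2nn : 0 ≤ SP2 := Finset.sum_nonneg (fun a _ => by positivity)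
  have hSL1nn : 0 ≤ SL1 := Finset.sum_nonneg (fun a _ => by positivity)
  have hSL2nn : 0 ≤ SL2 := Finset.sum_nonneg (fun a _ => by positivity)
  -- the key identity
  have key : (∑ p ∈ P, ∑ ℓ ∈ L, if p ∈ ℓ then (wP p : ℝ) * wL ℓ else 0)
      = ∑ k ∈ KP, ∑ l ∈ KL,
          ∑ p ∈ P.filter (fun p => k ≤ wP p), ∑ ℓ ∈ L.filter (fun ℓ => l ≤ wL ℓ),
            (if p ∈ ℓ then (1:ℝ) else 0) := by
    calc (∑ p ∈ P, ∑ ℓ ∈ L, if p ∈ ℓ then (wP p : ℝ) * wL ℓ else 0)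
        = ∑ p ∈ P, ∑ ℓ ∈ L, ∑ k ∈ KP, ∑ l ∈ KL,
            (if k ≤ wP p then (1:ℝ) else 0) *
              ((if l ≤ wL ℓ then (1:ℝ) else 0) * (if p ∈ ℓ then (1:ℝ) else 0)) := by
          refine Finset.sum_congr rfl (fun p hp => Finset.sum_congr rfl (fun ℓ hℓ => ?_))
          have h2 : ∑ k ∈ KP, ∑ l ∈ KL,
              (if k ≤ wP p then (1:ℝ) else 0) *
                ((if l ≤ wL ℓ then (1:ℝ) else 0) * (if p ∈ ℓ then (1:ℝ) else 0))
              = (∑ k ∈ KP, if k ≤ wP p then (1:ℝ) else 0) *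
                ((∑ l ∈ KL, if l ≤ wL ℓ then (1:ℝ) else 0) * (if p ∈ ℓ then (1:ℝ) else 0)) := by
            rw [Finset.sum_mul]
            exact Finset.sum_congr rfl fun k _ => by rw [Finset.sum_mul, Finset.mul_sum]
          rw [h2, indicator_sum P wP p hp, indicator_sum L wL ℓ hℓ]
          split_ifs <;> ring
      _ = ∑ p ∈ P, ∑ k ∈ KP, ∑ ℓ ∈ L, ∑ l ∈ KL,
            (if k ≤ wP p then (1:ℝ) else 0) *
              ((if l ≤ wL ℓ then (1:ℝ) else 0) * (if p ∈ ℓ then (1:ℝ) else 0)) :=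
          Finset.sum_congr rfl (fun p _ => Finset.sum_comm)
      _ = ∑ k ∈ KP, ∑ p ∈ P, ∑ ℓ ∈ L, ∑ l ∈ KL, _ := Finset.sum_comm
      _ = ∑ k ∈ KP, ∑ p ∈ P, ∑ l ∈ KL, ∑ ℓ ∈ L,
            (if k ≤ wP p then (1:ℝ) else 0) *
              ((if l ≤ wL ℓ then (1:ℝ) else 0) * (if p ∈ ℓ then (1:ℝ) else 0)) :=
          Finset.sum_congr rfl (fun k _ => Finset.sum_congr rfl (fun p _ => Finset.sum_comm))
      _ = ∑ k ∈ KP, ∑ l ∈ KL, ∑ p ∈ P, ∑ ℓ ∈ L,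
            (if k ≤ wP p then (1:ℝ) else 0) *
              ((if l ≤ wL ℓ then (1:ℝ) else 0) * (if p ∈ ℓ then (1:ℝ) else 0)) :=
          Finset.sum_congr rfl (fun k _ => Finset.sum_comm)
      _ = ∑ k ∈ KP, ∑ l ∈ KL,
            ∑ p ∈ P.filter (fun p => k ≤ wP p), ∑ ℓ ∈ L.filter (fun ℓ => l ≤ wL ℓ),
              (if p ∈ ℓ then (1:ℝ) else 0) := by
          refine Finset.sum_congr rfl (fun k _ => Finset.sum_congr rfl (fun l _ => ?_))
          simp only [Finset.sum_filter, ← Finset.mul_sum, boole_mul]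
          exact Finset.sum_congr rfl (fun p _ => by by_cases h : k ≤ wP p <;> simp [h])
  rw [key]
  -- apply unweighted ST to each class pair
  have bound : ∀ k, ∀ l,
      (∑ p ∈ P.filter (fun p => k ≤ wP p), ∑ ℓ ∈ L.filter (fun ℓ => l ≤ wL ℓ),
        (if p ∈ ℓ then (1:ℝ) else 0))
      ≤ C₀ * (((P.filter (fun p => k ≤ wP p)).card : ℝ) ^ ((2:ℝ)/3) *
          ((L.filter (fun ℓ => l ≤ wL ℓ)).card : ℝ) ^ ((2:ℝ)/3) +
          ((P.filter (fun p => k ≤ wP p)).card : ℝ) +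
          ((L.filter (fun ℓ => l ≤ wL ℓ)).card : ℝ)) := by
    intro k l
    exact hST _ _ (fun ℓ hℓ => hL ℓ (Finset.filter_subset _ _ hℓ))
  have main : ∑ k ∈ KP, ∑ l ∈ KL,
      (∑ p ∈ P.filter (fun p => k ≤ wP p), ∑ ℓ ∈ L.filter (fun ℓ => l ≤ wL ℓ),
        (if p ∈ ℓ then (1:ℝ) else 0))
      ≤ C₀ * ((∑ k ∈ KP, ((P.filter (fun p => k ≤ wP p)).card : ℝ) ^ ((2:ℝ)/3)) *
            (∑ l ∈ KL, ((L.filter (fun ℓ => l ≤ wL ℓ)).card : ℝ) ^ ((2:ℝ)/3))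
          + (NL : ℝ) * SP1 + (NP : ℝ) * SL1) := by
    calc ∑ k ∈ KP, ∑ l ∈ KL, _
        ≤ ∑ k ∈ KP, ∑ l ∈ KL, C₀ *
            (((P.filter (fun p => k ≤ wP p)).card : ℝ) ^ ((2:ℝ)/3) *
              ((L.filter (fun ℓ => l ≤ wL ℓ)).card : ℝ) ^ ((2:ℝ)/3) +
              ((P.filter (fun p => k ≤ wP p)).card : ℝ) +
              ((L.filter (fun ℓ => l ≤ wL ℓ)).card : ℝ)) :=
          Finset.sum_le_sum (fun k _ => Finset.sum_le_sum (fun l _ => bound k l))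
      _ = C₀ * ((∑ k ∈ KP, ((P.filter (fun p => k ≤ wP p)).card : ℝ) ^ ((2:ℝ)/3)) *
            (∑ l ∈ KL, ((L.filter (fun ℓ => l ≤ wL ℓ)).card : ℝ) ^ ((2:ℝ)/3))
          + (NL : ℝ) * SP1 + (NP : ℝ) * SL1) := by
          have eA : ∑ k ∈ KP, ∑ l ∈ KL,
              (((P.filter (fun p => k ≤ wP p)).card : ℝ) ^ ((2:ℝ)/3) *
                ((L.filter (fun ℓ => l ≤ wL ℓ)).card : ℝ) ^ ((2:ℝ)/3))
              = (∑ k ∈ KP, ((P.filter (fun p => k ≤ wP p)).card : ℝ) ^ ((2:ℝ)/3)) *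
                (∑ l ∈ KL, ((L.filter (fun ℓ => l ≤ wL ℓ)).card : ℝ) ^ ((2:ℝ)/3)) :=
            (Finset.sum_mul_sum KP KL _ _).symm
          have eB : ∑ k ∈ KP, ∑ _l ∈ KL,
              ((P.filter (fun p => k ≤ wP p)).card : ℝ) = (NL : ℝ) * SP1 := by
            rw [Finset.sum_congr rfl (fun k (_ : k ∈ KP) => Finset.sum_const _)]
            simp only [nsmul_eq_mul, ← Finset.mul_sum]
            rw [hKP, hNP, class_card_total P wP, hKL, Nat.card_Icc]
            simp
            exact Or.inl rfl
          have eC : ∑ _k ∈ KP, ∑ l ∈ KL,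
              ((L.filter (fun ℓ => l ≤ wL ℓ)).card : ℝ) = (NP : ℝ) * SL1 := by
            rw [Finset.sum_const, nsmul_eq_mul, hKL, hNL, class_card_total L wL,
              hKP, Nat.card_Icc]
            simp
            exact Or.inl rfl
          simp only [← Finset.mul_sum]
          congr 1
          calc ∑ k ∈ KP, ∑ l ∈ KL,
              (((P.filter (fun p => k ≤ wP p)).card : ℝ) ^ ((2:ℝ)/3) *
                ((L.filter (fun ℓ => l ≤ wL ℓ)).card : ℝ) ^ ((2:ℝ)/3) +
                ((P.filter (fun p => k ≤ wP p)).card : ℝ) +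
                ((L.filter (fun ℓ => l ≤ wL ℓ)).card : ℝ))
              = ∑ k ∈ KP, ∑ l ∈ KL,
                (((P.filter (fun p => k ≤ wP p)).card : ℝ) ^ ((2:ℝ)/3) *
                  ((L.filter (fun ℓ => l ≤ wL ℓ)).card : ℝ) ^ ((2:ℝ)/3)) +
                (∑ k ∈ KP, ∑ _l ∈ KL, ((P.filter (fun p => k ≤ wP p)).card : ℝ)) +
                (∑ _k ∈ KP, ∑ l ∈ KL, ((L.filter (fun ℓ => l ≤ wL ℓ)).card : ℝ)) := by
                simp only [Finset.sum_add_distrib]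
            _ = _ := by rw [eA, eB, eC]
  refine le_trans main ?_
  have sumP := weight_class_sum P wP
  have sumL := weight_class_sum L wL
  have sumPnn : 0 ≤ ∑ k ∈ KP, ((P.filter (fun p => k ≤ wP p)).card : ℝ) ^ ((2:ℝ)/3) :=
    Finset.sum_nonneg (fun k _ => Real.rpow_nonneg (Nat.cast_nonneg _) _)
  have sumLnn : 0 ≤ ∑ l ∈ KL, ((L.filter (fun ℓ => l ≤ wL ℓ)).card : ℝ) ^ ((2:ℝ)/3) :=
    Finset.sum_nonneg (fun l _ => Real.rpow_nonneg (Nat.cast_nonneg _) _)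
  have prod_le : (∑ k ∈ KP, ((P.filter (fun p => k ≤ wP p)).card : ℝ) ^ ((2:ℝ)/3)) *
      (∑ l ∈ KL, ((L.filter (fun ℓ => l ≤ wL ℓ)).card : ℝ) ^ ((2:ℝ)/3))
      ≤ 49 * ((SP2 * SP1 * SL2 * SL1) ^ ((1:ℝ)/3)) := by
    calc (∑ k ∈ KP, ((P.filter (fun p => k ≤ wP p)).card : ℝ) ^ ((2:ℝ)/3)) *
        (∑ l ∈ KL, ((L.filter (fun ℓ => l ≤ wL ℓ)).card : ℝ) ^ ((2:ℝ)/3))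
        ≤ (7 * ((SP2 * SP1) ^ ((1:ℝ)/3))) * (7 * ((SL2 * SL1) ^ ((1:ℝ)/3))) := by
          apply mul_le_mul sumP sumL sumLnn
          positivity
      _ = 49 * ((SP2 * SP1) ^ ((1:ℝ)/3) * ((SL2 * SL1) ^ ((1:ℝ)/3))) := by ring
      _ = 49 * ((SP2 * SP1 * SL2 * SL1) ^ ((1:ℝ)/3)) := by
          rw [← Real.mul_rpow (by positivity) (by positivity)]
          ring_nf
  have h1 : 0 ≤ (NL:ℝ) * SP1 := by positivity
  have h2 : 0 ≤ (NP:ℝ) * SL1 := by positivity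
  have hX : (0:ℝ) ≤ (SP2 * SP1 * SL2 * SL1) ^ ((1:ℝ)/3) := by positivity
  nlinarith [mul_le_mul_of_nonneg_left prod_le hC₀pos.le,
    mul_nonneg hC₀pos.le h1, mul_nonneg hC₀pos.le h2, mul_nonneg hC₀pos.le hX]
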